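/- (Injectivity of the LP sum-pooling.) Let N ≥ 2, D ≥ 1, K₁ = N(N−1)(D−1)/2 + 1, and K₂ = N(N−1) + 1. Let w_1,…,w_{K₁} ∈ ℝ^D be such that every subset of D of them is linearly independent, and let γ_1,…,γ_{K₂} ∈ ℝ be nonzero, pairwise distinct, and such that for all a, b, c, d ∈ {1,…,K₂}, if γ_a ≠ γ_b and γ_a ≠ γ_c then γ_a/γ_b ≠ γ_c/γ_d. Let W ⊆ ℝ^D be the family consisting of: the canonical basis vectors e_1,…,e_D; the vectors w_1,…,w_{K₁}; and the vectors e_i − γ_k w_j for all i ∈ {1,…,D}, j ∈ {1,…,K₁}, k ∈ {1,…,K₂}. If X, X' ∈ ℝ^{N×D} satisfy Σ_{n=1}^N ⟨w, x^{(n)}⟩^m = Σ_{n=1}^N ⟨w, x'^{(n)}⟩^m for every w ∈ W and every m ∈ {1,…,N}, then there exists a permutation σ of {1,…,N} with x'^{(σ(n))} = x^{(n)} for all n (i.e., X ~ X'). -/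

import Mathlib

open Finset

/-- From equality of multisets of values, get a permutation matching the tuples. -/
lemma lp_exists_perm_of_multiset_map_eq {n : ℕ} {a b : Fin n → ℝ}
    (h : Multiset.map a Finset.univ.val = Multiset.map b Finset.univ.val) :
    ∃ σ : Equiv.Perm (Fin n), ∀ i, b (σ i) = a i := by
  have hperm : (List.ofFn a).Perm (List.ofFn b) := by
    rw [← Multiset.coe_eq_coe, ← Fin.univ_val_map, ← Fin.univ_val_map]
    exact h
  have hsorted : a ∘ Tuple.sort a = b ∘ Tuple.sort b := by
    apply List.ofFn_injective
    apply List.Perm.eq_of_sortedLE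
    · exact (Tuple.monotone_sort a).sortedLE_ofFn
    · exact (Tuple.monotone_sort b).sortedLE_ofFn
    · exact ((Equiv.Perm.ofFn_comp_perm _ a).trans hperm).trans
        (Equiv.Perm.ofFn_comp_perm _ b).symm
  refine ⟨(Tuple.sort a).symm.trans (Tuple.sort b), fun i => ?_⟩
  have := congrFun hsorted ((Tuple.sort a).symm i)
  simpa using this.symm

/-- Newton's identity at the value level. -/
lemma lp_newton {n : ℕ} (f : Fin n → ℝ) (k : ℕ) :
    (k : ℝ) * (Multiset.map f Finset.univ.val).esymm k =
      (-1) ^ (k + 1) * ∑ p ∈ (Finset.HasAntidiagonal.antidiagonal k).filter (fun p => p.1 < k),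
        (-1) ^ p.1 * (Multiset.map f Finset.univ.val).esymm p.1 * ∑ i, f i ^ p.2 := by
  have := congrArg (MvPolynomial.aeval f) (MvPolynomial.mul_esymm_eq_sum (Fin n) ℝ k)
  simpa [MvPolynomial.aeval_esymm_eq_multiset_esymm, MvPolynomial.psum,
    map_sum, map_mul, map_pow, Finset.mul_sum] using this

/-- Equal power sums (degrees 1..n) give equal multisets of values. -/
lemma lp_multiset_map_eq_of_powersum {n : ℕ} {a b : Fin n → ℝ}
    (h : ∀ m ∈ Finset.Icc 1 n, ∑ i, a i ^ m = ∑ i, b i ^ m) :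
    Multiset.map a Finset.univ.val = Multiset.map b Finset.univ.val := by
  have hesymm : ∀ k, k ≤ n →
      (Multiset.map a Finset.univ.val).esymm k = (Multiset.map b Finset.univ.val).esymm k := by
    intro k
    induction k using Nat.strong_induction_on with
    | _ k ih =>
      intro hk
      rcases Nat.eq_zero_or_pos k with rfl | hk0
      · simp [Multiset.esymm]
      · have ha := lp_newton a k
        have hb := lp_newton b k
        have hsum : ∑ p ∈ (Finset.HasAntidiagonal.antidiagonal k).filter (fun p => p.1 < k),
            (-1 : ℝ) ^ p.1 * (Multiset.map a Finset.univ.val).esymm p.1 * ∑ i, a i ^ p.2 =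
            ∑ p ∈ (Finset.HasAntidiagonal.antidiagonal k).filter (fun p => p.1 < k),
            (-1 : ℝ) ^ p.1 * (Multiset.map b Finset.univ.val).esymm p.1 * ∑ i, b i ^ p.2 := by
          refine Finset.sum_congr rfl fun p hp => ?_
          simp only [Finset.mem_filter, Finset.HasAntidiagonal.mem_antidiagonal] at hp
          rw [ih p.1 hp.2 (le_trans hp.2.le hk), h p.2 (Finset.mem_Icc.mpr ⟨by omega, by omega⟩)]
        have : (k : ℝ) * (Multiset.map a Finset.univ.val).esymm k =
            (k : ℝ) * (Multiset.map b Finset.univ.val).esymm k := by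
          rw [ha, hsum, ← hb]
        exact mul_left_cancel₀ (Nat.cast_ne_zero.mpr hk0.ne') this
  have hcard_a : Multiset.card (Multiset.map a Finset.univ.val) = n := by simp
  have hcard_b : Multiset.card (Multiset.map b Finset.univ.val) = n := by simp
  have hpoly : ((Multiset.map a Finset.univ.val).map fun t => Polynomial.X - Polynomial.C t).prod
      = ((Multiset.map b Finset.univ.val).map fun t => Polynomial.X - Polynomial.C t).prod := by
    apply Polynomial.ext
    intro k
    rcases le_or_gt k n with hkn | hkn
    · rw [Multiset.prod_X_sub_C_coeff _ (by rw [hcard_a]; exact hkn),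
        Multiset.prod_X_sub_C_coeff _ (by rw [hcard_b]; exact hkn), hcard_a, hcard_b,
        hesymm (n - k) (Nat.sub_le _ _)]
    · rw [Polynomial.coeff_eq_zero_of_natDegree_lt, Polynomial.coeff_eq_zero_of_natDegree_lt] <;>
        rw [Polynomial.natDegree_multiset_prod_X_sub_C_eq_card] <;> simpa
  have := congrArg Polynomial.roots hpoly
  rwa [Polynomial.roots_multiset_prod_X_sub_C, Polynomial.roots_multiset_prod_X_sub_C] at this

/-- A nonzero vector is orthogonal to at most `D - 1` of a family of vectors in `ℝ^D`
every `D` of which are linearly independent. -/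
lemma lp_card_orth_le {K D : ℕ} (w : Fin K → Fin D → ℝ)
    (hw : ∀ s : Finset (Fin K), s.card = D → LinearIndependent ℝ (fun j : s => w j))
    (u : Fin D → ℝ) (hu : u ≠ 0) :
    (Finset.univ.filter (fun j => ∑ d, w j d * u d = 0)).card ≤ D - 1 := by
  by_contra hcard
  push_neg at hcard
  have hD : D ≤ (Finset.univ.filter (fun j => ∑ d, w j d * u d = 0)).card := by omega
  obtain ⟨s, hsub, hscard⟩ := Finset.exists_subset_card_eq hD
  have hli := hw s hscard
  have hcards : Fintype.card s = Module.finrank ℝ (Fin D → ℝ) := by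
    simp [hscard, Module.finrank_pi]
  have hspan : Submodule.span ℝ (Set.range (fun j : s => w j)) = ⊤ :=
    hli.span_eq_top_of_card_eq_finrank' hcards
  set φ : (Fin D → ℝ) →ₗ[ℝ] ℝ := ∑ d, u d • LinearMap.proj d with hφ
  have hφapp : ∀ v : Fin D → ℝ, φ v = ∑ d, u d * v d := by
    intro v
    simp [hφ, LinearMap.sum_apply]
  have hker : ∀ v : Fin D → ℝ, φ v = 0 := by
    have hle : Submodule.span ℝ (Set.range (fun j : s => w j)) ≤ LinearMap.ker φ := by
      rw [Submodule.span_le]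
      rintro - ⟨j, rfl⟩
      have hj : (j : Fin K) ∈ Finset.univ.filter (fun j => ∑ d, w j d * u d = 0) :=
        hsub j.2
      simp only [Finset.mem_filter] at hj
      simp only [SetLike.mem_coe, LinearMap.mem_ker, hφapp]
      rw [← hj.2]
      exact Finset.sum_congr rfl fun d _ => mul_comm _ _
    rw [hspan, top_le_iff] at hle
    intro v
    have : v ∈ LinearMap.ker φ := hle ▸ Submodule.mem_top
    exact this
  have h0 : ∑ d, u d * u d = 0 := by rw [← hφapp u]; exact hker u
  apply hu
  funext d
  have := (Finset.sum_eq_zero_iff_of_nonneg (fun d _ => mul_self_nonneg (u d))).mp h0 d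
    (Finset.mem_univ d)
  exact mul_self_eq_zero.mp this

/-- The number of strictly increasing pairs in `Fin n × Fin n`. -/
lemma lp_card_lt_pairs (n : ℕ) :
    ((Finset.univ : Finset (Fin n × Fin n)).filter (fun p => p.1 < p.2)).card
      = n * (n - 1) / 2 := by
  have hfib : ∀ m : Fin n,
      ((Finset.univ : Finset (Fin n × Fin n)).filter (fun p => p.1 < p.2)).filter
        (fun p => p.2 = m) = (Finset.Iio m).image (fun x => (x, m)) := by
    intro m
    ext ⟨p1, p2⟩
    simp only [Finset.mem_filter, Finset.mem_univ, true_and, Finset.mem_image,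
      Finset.mem_Iio, Prod.mk.injEq]
    constructor
    · rintro ⟨hlt, rfl⟩; exact ⟨p1, hlt, rfl, rfl⟩
    · rintro ⟨x, hx, rfl, rfl⟩; exact ⟨hx, rfl⟩
  rw [Finset.card_eq_sum_card_fiberwise (f := Prod.snd) (t := Finset.univ)
    (fun x _ => Finset.mem_univ _)]
  have : ∀ m : Fin n,
      (((Finset.univ : Finset (Fin n × Fin n)).filter (fun p => p.1 < p.2)).filter
        (fun p => p.2 = m)).card = (m : ℕ) := by
    intro m
    rw [hfib m, Finset.card_image_of_injective _ (fun x y hxy => (Prod.mk.injEq _ _ _ _).mp hxy |>.1),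
      Fin.card_Iio]
  calc ∑ m : Fin n, (((Finset.univ : Finset (Fin n × Fin n)).filter (fun p => p.1 < p.2)).filter
        (fun p => p.2 = m)).card
      = ∑ m : Fin n, (m : ℕ) := Finset.sum_congr rfl (fun m _ => this m)
    _ = ∑ m ∈ Finset.range n, m := Fin.sum_univ_eq_sum_range (fun x => x) n
    _ = n * (n - 1) / 2 := Finset.sum_range_id n

lemma lp_inner_single {D : ℕ} (i : Fin D) (x : Fin D → ℝ) :
    ∑ d, (Pi.single i (1 : ℝ) : Fin D → ℝ) d * x d = x i := by
  simp [Pi.single_apply, ite_mul]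

lemma lp_inner_coupling {D : ℕ} (i : Fin D) (c : ℝ) (wv x : Fin D → ℝ) :
    ∑ d, ((Pi.single i (1 : ℝ) : Fin D → ℝ) - c • wv) d * x d = x i - c * ∑ d, wv d * x d := by
  simp only [Pi.sub_apply, Pi.smul_apply, smul_eq_mul, sub_mul, Finset.sum_sub_distrib,
    lp_inner_single, mul_assoc, ← Finset.mul_sum]

/-- Injectivity of the LP sum-pooling: with the family `W` consisting of the
canonical basis vectors `e_i`, the anchor-generating weights `w_j` (every `D`
of which are linearly independent), and the coupling vectors `e_i − γ_k w_j`,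
equality of all power sums `∑_n ⟨v, x^{(n)}⟩^m` (`v ∈ W`, `1 ≤ m ≤ N`) for `X`
and `X'` implies `X ~ X'`. -/
theorem lp_injectivity (N D : ℕ) (hN : 2 ≤ N) (hD : 1 ≤ D)
    (w : Fin (N * (N - 1) * (D - 1) / 2 + 1) → Fin D → ℝ)
    (hw : ∀ s : Finset (Fin (N * (N - 1) * (D - 1) / 2 + 1)), s.card = D →
      LinearIndependent ℝ (fun j : s => w j))
    (γ : Fin (N * (N - 1) + 1) → ℝ)
    (hγ0 : ∀ k, γ k ≠ 0)
    (hγinj : Function.Injective γ)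
    (hγratio : ∀ a b c d : Fin (N * (N - 1) + 1),
      γ a ≠ γ b → γ a ≠ γ c → γ a / γ b ≠ γ c / γ d)
    (X X' : Fin N → Fin D → ℝ)
    (h : ∀ v ∈ ({v : Fin D → ℝ | (∃ i, v = Pi.single i 1) ∨ (∃ j, v = w j) ∨
        (∃ i j k, v = Pi.single i 1 - γ k • w j)} : Set (Fin D → ℝ)),
      ∀ m ∈ Finset.Icc 1 N,
        ∑ n, (∑ d, v d * X n d) ^ m = ∑ n, (∑ d, v d * X' n d) ^ m) :
    ∃ σ : Equiv.Perm (Fin N), ∀ n, X' (σ n) = X n := by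
  classical
  -- Step 1: find an index j such that ⟨w j, ·⟩ separates distinct rows of X.
  have hexj : ∃ j, ∀ n m : Fin N, n < m → X n ≠ X m →
      ∑ d, w j d * (X n d - X m d) ≠ 0 := by
    set P : Finset (Fin N × Fin N) :=
      Finset.univ.filter (fun p => p.1 < p.2 ∧ X p.1 ≠ X p.2) with hP
    set B : Fin N × Fin N → Finset (Fin (N * (N - 1) * (D - 1) / 2 + 1)) :=
      fun p => Finset.univ.filter (fun j => ∑ d, w j d * (X p.1 d - X p.2 d) = 0) with hB
    have hBcard : ∀ p ∈ P, (B p).card ≤ D - 1 := by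
      intro p hp
      simp only [hP, Finset.mem_filter] at hp
      refine lp_card_orth_le w hw (fun d => X p.1 d - X p.2 d) ?_
      intro h0
      exact hp.2.2 (funext fun d => by
        have := congrFun h0 d
        simp only [Pi.zero_apply] at this
        linarith)
    have hbadcard : (P.biUnion B).card ≤ N * (N - 1) / 2 * (D - 1) := by
      refine (Finset.card_biUnion_le_card_mul _ _ _ hBcard).trans ?_
      apply Nat.mul_le_mul_right
      calc P.card
          ≤ ((Finset.univ : Finset (Fin N × Fin N)).filter (fun p => p.1 < p.2)).card := by
            apply Finset.card_le_card
            intro p hp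
            simp only [hP, Finset.mem_filter] at hp ⊢
            exact ⟨hp.1, hp.2.1⟩
        _ = N * (N - 1) / 2 := lp_card_lt_pairs N
    have harith : N * (N - 1) / 2 * (D - 1) = N * (N - 1) * (D - 1) / 2 := by
      obtain ⟨c, hc⟩ : 2 ∣ N * (N - 1) := by
        rcases Nat.even_or_odd N with he | ho
        · exact Dvd.dvd.mul_right he.two_dvd _
        · exact Dvd.dvd.mul_left (Nat.Odd.sub_odd ho odd_one).two_dvd _
      rw [hc, Nat.mul_div_cancel_left c (by norm_num), mul_assoc,
        Nat.mul_div_cancel_left _ (by norm_num : 0 < 2)]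
    obtain ⟨j, hj⟩ : ∃ j, j ∉ P.biUnion B := by
      by_contra hall
      push_neg at hall
      have hsub : (Finset.univ : Finset (Fin (N * (N - 1) * (D - 1) / 2 + 1))) ⊆ P.biUnion B :=
        fun j _ => hall j
      have := Finset.card_le_card hsub
      rw [Finset.card_univ, Fintype.card_fin] at this
      omega
    refine ⟨j, fun n m hlt hne h0 => hj ?_⟩
    refine Finset.mem_biUnion.mpr ⟨(n, m), ?_, ?_⟩
    · simp only [hP, Finset.mem_filter]
      exact ⟨Finset.mem_univ _, hlt, hne⟩
    · simp only [hB, Finset.mem_filter]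
      exact ⟨Finset.mem_univ _, h0⟩
  obtain ⟨j, hj⟩ := hexj
  have hsep : ∀ n m : Fin N, X n ≠ X m →
      (∑ d, w j d * X n d) ≠ ∑ d, w j d * X m d := by
    have key : ∀ n m : Fin N, n < m → X n ≠ X m →
        (∑ d, w j d * X n d) ≠ ∑ d, w j d * X m d := by
      intro n m hlt hne heq
      refine hj n m hlt hne ?_
      have : ∑ d, (w j d * X n d - w j d * X m d) = 0 := by
        rw [Finset.sum_sub_distrib, heq, sub_self]
      rw [← this]
      exact Finset.sum_congr rfl fun d _ => by ring
    intro n m hne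
    rcases lt_trichotomy n m with hlt | heq | hgt
    · exact key n m hlt hne
    · exact absurd (congrArg X heq) hne
    · intro heq
      exact key m n hgt hne.symm heq.symm
  -- Step 2: the permutation matching the anchor values.
  set a : Fin N → ℝ := fun n => ∑ d, w j d * X n d with ha
  set a' : Fin N → ℝ := fun n => ∑ d, w j d * X' n d with ha'
  obtain ⟨σ, hσ⟩ := lp_exists_perm_of_multiset_map_eq
    (lp_multiset_map_eq_of_powersum (h (w j) (Or.inr (Or.inl ⟨j, rfl⟩))))
  -- hσ : ∀ n, a' (σ n) = a n
  refine ⟨σ, fun n₀ => funext fun i => ?_⟩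
  -- Step 3: fix the coordinate i; find a good k.
  have hτ : ∀ k : Fin (N * (N - 1) + 1), ∃ τ : Equiv.Perm (Fin N),
      ∀ n, X' (σ (τ n)) i - γ k * a (τ n) = X n i - γ k * a n := by
    intro k
    have hv := h (Pi.single i 1 - γ k • w j) (Or.inr (Or.inr ⟨i, j, k, rfl⟩))
    simp only [lp_inner_coupling] at hv
    have hmeq := lp_multiset_map_eq_of_powersum hv
    have hsigma : Multiset.map (fun n => X' n i - γ k * a' n) Finset.univ.val =
        Multiset.map (fun n => X' (σ n) i - γ k * a n) Finset.univ.val := by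
      conv_lhs => rw [← Multiset.map_univ_val_equiv (σ : Fin N ≃ Fin N), Multiset.map_map]
      refine Multiset.map_congr rfl fun x _ => ?_
      exact congrArg (fun t => X' (σ x) i - γ k * t) (hσ x)
    rw [hsigma] at hmeq
    obtain ⟨τ, hτ⟩ := lp_exists_perm_of_multiset_map_eq hmeq
    exact ⟨τ, hτ⟩
  choose τ hτ using hτ
  -- bad k's: those whose permutation moves some anchor value
  set bad : Finset (Fin (N * (N - 1) + 1)) :=
    Finset.univ.filter (fun k => ∃ n, a (τ k n) ≠ a n) with hbad
  set F : Fin (N * (N - 1) + 1) → Fin N × Fin N := fun k =>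
    if hk : ∃ n, a (τ k n) ≠ a n then (Classical.choose hk, τ k (Classical.choose hk))
    else (⟨0, by omega⟩, ⟨0, by omega⟩) with hF
  have hFmem : ∀ k ∈ bad, F k ∈ (Finset.univ : Finset (Fin N)).offDiag := by
    intro k hk
    simp only [hbad, Finset.mem_filter, Finset.mem_univ, true_and] at hk
    simp only [hF, dif_pos hk]
    refine Finset.mem_offDiag.mpr ⟨Finset.mem_univ _, Finset.mem_univ _, ?_⟩
    intro heq
    simp only [Prod.mk.injEq] at heq  -- not needed; heq : fst = snd
    exact Classical.choose_spec hk (by rw [← heq])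
  have hgamma : ∀ k ∈ bad, γ k * (a (F k).1 - a (F k).2) = X (F k).1 i - X' (σ (F k).2) i := by
    intro k hk
    simp only [hbad, Finset.mem_filter, Finset.mem_univ, true_and] at hk
    simp only [hF, dif_pos hk]
    have := hτ k (Classical.choose hk)
    ring_nf
    ring_nf at this
    linarith
  have hFinj : Set.InjOn F bad := by
    intro k hk k' hk' heq
    have h1 := hgamma k hk
    have h2 := hgamma k' hk'
    rw [heq] at h1
    have hk'' : ∃ n, a (τ k n) ≠ a n := by
      simpa [hbad, Finset.mem_filter] using hk
    have hne : a (F k').1 - a (F k').2 ≠ 0 := by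
      have hk2 : ∃ n, a (τ k' n) ≠ a n := by
        simpa [hbad, Finset.mem_filter] using hk'
      simp only [hF, dif_pos hk2]
      exact sub_ne_zero.mpr (Ne.symm (Classical.choose_spec hk2))
    apply hγinj
    have := h1.trans h2.symm
    exact mul_right_cancel₀ hne this
  have hbadcard : bad.card < N * (N - 1) + 1 := by
    have h1 := Finset.card_le_card_of_injOn F hFmem hFinj
    have h2 : ((Finset.univ : Finset (Fin N)).offDiag).card = N * N - N := by
      rw [Finset.offDiag_card, Finset.card_univ, Fintype.card_fin]
    have hNN : N * N - N = N * (N - 1) := by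
      cases N with
      | zero => simp
      | succ n =>
        have : (n + 1) * (n + 1 - 1) = (n+1) * n := by norm_num
        rw [this]
        have : (n + 1) * (n + 1) = (n+1) * n + (n+1) := by ring
        omega
    omega
  obtain ⟨k, hk⟩ : ∃ k, k ∉ bad := by
    by_contra hall
    push_neg at hall
    have hsub : (Finset.univ : Finset (Fin (N * (N - 1) + 1))) ⊆ bad := fun k _ => hall k
    have := Finset.card_le_card hsub
    rw [Finset.card_univ, Fintype.card_fin] at this
    omega
  have hgood : ∀ n, a (τ k n) = a n := by
    intro n
    by_contra hne
    exact hk (by simp only [hbad, Finset.mem_filter, Finset.mem_univ, true_and]; exact ⟨n, hne⟩)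
  -- For the good k, the coupling equation pins down coordinate i.
  have hcoord : ∀ n, X' (σ (τ k n)) i = X (τ k n) i := by
    intro n
    have h1 := hτ k n
    rw [hgood n] at h1
    have h2 : X' (σ (τ k n)) i = X n i := by linarith
    have h3 : X (τ k n) = X n := by
      by_contra hne
      exact hsep _ _ hne (hgood n)
    rw [h2, h3]
  have := hcoord ((τ k)⁻¹ n₀)
  simpa using this
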